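/- arXiv:1909.04094 — 2 statements merged into one kernel-verified Lean document; each statement's English description precedes it below -/
import Mathlib

section
/- Let p, q be non-constant one-variable holomorphic polynomials, S = { (z,w) ∈ ℂ² : q(w) = conj(p(z)) }, and (z₀, w₀) ∈ S with p'(z₀) ≠ 0 and q'(w₀) ≠ 0. Then near (z₀, w₀), S is a totally real 2-dimensional real submanifold of ℂ²: the real tangent space T of S at (z₀,w₀) satisfies T ∩ iT = {0}. -/
open Complex Polynomial

theorem totally_real_tangent (p q : Polynomial ℂ)
    (hp : 0 < p.natDegree) (hq : 0 < q.natDegree) (z₀ w₀ : ℂ)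
    (hS : q.eval w₀ = starRingEnd ℂ (p.eval z₀))
    (hp' : (derivative p).eval z₀ ≠ 0) (hq' : (derivative q).eval w₀ ≠ 0) :
    ∀ x : ℂ × ℂ,
      (fderiv ℝ (fun zw : ℂ × ℂ => (p.eval zw.1 - q.eval zw.2).re) (z₀, w₀)) x = 0 →
      (fderiv ℝ (fun zw : ℂ × ℂ => (-(p.eval zw.1) - q.eval zw.2).im) (z₀, w₀)) x = 0 →
      (fderiv ℝ (fun zw : ℂ × ℂ => (p.eval zw.1 - q.eval zw.2).re) (z₀, w₀))
        (Complex.I • x) = 0 →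
      (fderiv ℝ (fun zw : ℂ × ℂ => (-(p.eval zw.1) - q.eval zw.2).im) (z₀, w₀))
        (Complex.I • x) = 0 →
      x = 0 := by
  intro x h1 h2 h3 h4
  set a := (derivative p).eval z₀ with ha
  set b := (derivative q).eval w₀ with hb
  have hP : HasFDerivAt (fun zw : ℂ × ℂ => p.eval zw.1)
      (a • (ContinuousLinearMap.fst ℂ ℂ ℂ)) (z₀, w₀) :=
    by
      have h2 : HasFDerivAt (Prod.fst : ℂ × ℂ → ℂ) (ContinuousLinearMap.fst ℂ ℂ ℂ) (z₀, w₀) :=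
        hasFDerivAt_fst
      have := HasDerivAt.comp_hasFDerivAt (z₀, w₀) (p.hasDerivAt z₀) h2
      exact this
  have hQ : HasFDerivAt (fun zw : ℂ × ℂ => q.eval zw.2)
      (b • (ContinuousLinearMap.snd ℂ ℂ ℂ)) (z₀, w₀) :=
    by
      have h2 : HasFDerivAt (Prod.snd : ℂ × ℂ → ℂ) (ContinuousLinearMap.snd ℂ ℂ ℂ) (z₀, w₀) :=
        hasFDerivAt_snd
      have := HasDerivAt.comp_hasFDerivAt (z₀, w₀) (q.hasDerivAt w₀) h2
      exact this
  have hF := hP.sub hQ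
  have hG := (hP.neg).sub hQ
  have hF' : HasFDerivAt (fun zw : ℂ × ℂ => (p.eval zw.1 - q.eval zw.2).re)
      (Complex.reCLM.comp ((a • (ContinuousLinearMap.fst ℂ ℂ ℂ)
        - b • (ContinuousLinearMap.snd ℂ ℂ ℂ)).restrictScalars ℝ)) (z₀, w₀) :=
    (Complex.reCLM.hasFDerivAt).comp _ (hF.restrictScalars ℝ)
  have hG' : HasFDerivAt (fun zw : ℂ × ℂ => (-(p.eval zw.1) - q.eval zw.2).im)
      (Complex.imCLM.comp ((-(a • (ContinuousLinearMap.fst ℂ ℂ ℂ))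
        - b • (ContinuousLinearMap.snd ℂ ℂ ℂ)).restrictScalars ℝ)) (z₀, w₀) :=
    (Complex.imCLM.hasFDerivAt).comp _ (hG.restrictScalars ℝ)
  rw [hF'.fderiv] at h1 h3
  rw [hG'.fderiv] at h2 h4
  simp only [ContinuousLinearMap.coe_comp', Function.comp_apply,
    ContinuousLinearMap.coe_restrictScalars', ContinuousLinearMap.sub_apply,
    ContinuousLinearMap.neg_apply, ContinuousLinearMap.smul_apply,
    ContinuousLinearMap.coe_fst', ContinuousLinearMap.coe_snd',
    Prod.smul_fst, Prod.smul_snd, smul_eq_mul, Complex.reCLM_apply,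
    Complex.imCLM_apply] at h1 h2 h3 h4
  have hu : a * x.1 - b * x.2 = 0 := by
    apply Complex.ext
    · simpa using h1
    · have : (a * (I * x.1) - b * (I * x.2)).re = -(a * x.1 - b * x.2).im := by
        simp [Complex.mul_re, Complex.mul_im, Complex.sub_im]; ring
      rw [this] at h3
      simpa using (neg_eq_zero.mp h3)
  have hv : -(a * x.1) - b * x.2 = 0 := by
    apply Complex.ext
    · have : (-(a * (I * x.1)) - b * (I * x.2)).im = (-(a * x.1) - b * x.2).re := by
        simp [Complex.mul_re, Complex.mul_im]; ring
      rw [this] at h4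
      simpa using h4
    · simpa using h2
  have hax : a * x.1 = 0 := by linear_combination (hu - hv) / 2
  have hbx : b * x.2 = 0 := by linear_combination (-hu - hv) / 2
  have hx1 : x.1 = 0 := by
    rcases mul_eq_zero.mp hax with h | h
    · exact absurd h hp'
    · exact h
  have hx2 : x.2 = 0 := by
    rcases mul_eq_zero.mp hbx with h | h
    · exact absurd h hq'
    · exact h
  exact Prod.ext hx1 hx2
end

section
/- Let K ⊂ ℂⁿ be compact with P(K) = C(K), i.e., every continuous function on K is a uniform limit of holomorphic polynomials. Then every closed subset L ⊂ K is polynomially convex and satisfies P(L) = C(L). -/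
open Complex Metric

/-- The polynomially convex hull of a compact set in ℂⁿ. -/
def polyHull {n : ℕ} (K : Set (EuclideanSpace ℂ (Fin n))) : Set (EuclideanSpace ℂ (Fin n)) :=
  {z | ∀ P : MvPolynomial (Fin n) ℂ,
    ‖MvPolynomial.eval (fun j => z j) P‖ ≤
      sSup ((fun w : EuclideanSpace ℂ (Fin n) => ‖MvPolynomial.eval (fun j => w j) P‖) '' K)}

set_option maxHeartbeats 1000000 in
theorem closed_subset_of_PK_eq_CK (n : ℕ) (K : Set (EuclideanSpace ℂ (Fin n)))
    (hK : IsCompact K)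
    (h : ∀ f : C(K, ℂ), ∀ ε > 0, ∃ P : MvPolynomial (Fin n) ℂ,
      ∀ z : K, ‖f z - MvPolynomial.eval (fun j => (z : EuclideanSpace ℂ (Fin n)) j) P‖ < ε)
    (L : Set (EuclideanSpace ℂ (Fin n))) (hL : IsClosed L) (hLK : L ⊆ K) :
    polyHull L = L ∧
    ∀ f : C(L, ℂ), ∀ ε > 0, ∃ P : MvPolynomial (Fin n) ℂ,
      ∀ z : L, ‖f z - MvPolynomial.eval (fun j => (z : EuclideanSpace ℂ (Fin n)) j) P‖ < ε := by
  classical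
  have happrox : ∀ f : C(L, ℂ), ∀ ε > 0, ∃ P : MvPolynomial (Fin n) ℂ,
      ∀ z : L, ‖f z - MvPolynomial.eval (fun j => (z : EuclideanSpace ℂ (Fin n)) j) P‖ < ε := by
    intro f ε hε
    obtain ⟨F, hF⟩ := f.exists_restrict_eq (Y := ℂ) hL
    obtain ⟨P, hP⟩ := h (F.restrict K) ε hε
    refine ⟨P, fun z => ?_⟩
    have h1 := hP ⟨z.1, hLK z.2⟩
    have h2 : f z = F z.1 := by rw [← hF]; rfl
    simpa [h2, ContinuousMap.restrict_apply] using h1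
  refine ⟨?_, happrox⟩
  have hLc : IsCompact L := hK.of_isClosed_subset hL hLK
  apply Set.Subset.antisymm
  · -- polyHull L ⊆ L
    intro a ha
    by_contra haL
    rcases L.eq_empty_or_nonempty with hLe | hLne
    · have h1 := ha 1
      simp [hLe, Real.sSup_empty] at h1
      linarith
    -- the distance-squared function
    set D : EuclideanSpace ℂ (Fin n) → ℝ := fun w => ∑ j, ‖w j - a j‖ ^ 2 with hD
    set T : EuclideanSpace ℂ (Fin n) → ℝ := fun w => ∑ j, ‖w j - a j‖ with hT
    have hDcont : Continuous D :=
      continuous_finset_sum _ fun j _ =>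
        (((EuclideanSpace.proj j).continuous.sub continuous_const).norm.pow 2)
    have hTcont : Continuous T :=
      continuous_finset_sum _ fun j _ =>
        ((EuclideanSpace.proj j).continuous.sub continuous_const).norm
    obtain ⟨w₀, hw₀L, hw₀min⟩ := hLc.exists_isMinOn hLne hDcont.continuousOn
    obtain ⟨m, hm⟩ : ∃ m : ℝ, m = D w₀ := ⟨_, rfl⟩
    have hmpos : 0 < m := by
      rw [hm]
      have hne : w₀ ≠ a := fun hh => haL (hh ▸ hw₀L)
      have : ∃ j, w₀ j ≠ a j := by
        by_contra hc
        push_neg at hc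
        exact hne (PiLp.ext hc)
      obtain ⟨j, hj⟩ := this
      have hjpos : 0 < ‖w₀ j - a j‖ ^ 2 := by
        have h0 : (0:ℝ) < ‖w₀ j - a j‖ := norm_pos_iff.mpr (sub_ne_zero.2 hj)
        positivity
      exact Finset.sum_pos' (fun i _ => by positivity) ⟨j, Finset.mem_univ j, hjpos⟩
    have hKne : K.Nonempty := hLne.mono hLK
    obtain ⟨v, hvK, hvmax⟩ := hK.exists_isMaxOn hKne hTcont.continuousOn
    obtain ⟨R, hR⟩ : ∃ R : ℝ, R = T v := ⟨_, rfl⟩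
    have hR0 : 0 ≤ R := hR ▸ Finset.sum_nonneg fun j _ => norm_nonneg _
    have hTle : ∀ w ∈ K, T w ≤ R := fun w hw => hR ▸ hvmax hw
    have hcoordle : ∀ w ∈ K, ∀ j, ‖w j - a j‖ ≤ R := by
      intro w hw j
      refine le_trans ?_ (hTle w hw)
      exact Finset.single_le_sum (f := fun i => ‖w i - a i‖) (fun i _ => norm_nonneg _)
        (Finset.mem_univ j)
    have hDle : ∀ w ∈ K, D w ≤ R ^ 2 := by
      intro w hw
      have : D w ≤ ∑ j : Fin n, ‖w j - a j‖ * R := by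
        refine Finset.sum_le_sum fun j _ => ?_
        rw [pow_two]
        exact mul_le_mul_of_nonneg_left (hcoordle w hw j) (norm_nonneg _)
      calc D w ≤ ∑ j : Fin n, ‖w j - a j‖ * R := this
        _ = T w * R := by rw [hT, Finset.sum_mul]
        _ ≤ R * R := mul_le_mul_of_nonneg_right (hTle w hw) hR0
        _ = R ^ 2 := (pow_two R).symm
    obtain ⟨δ, hδdef⟩ : ∃ δ : ℝ, δ = m / (2 * (R + 1)) := ⟨_, rfl⟩
    have hδpos : 0 < δ := by rw [hδdef]; positivity
    -- approximate conj coordinates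
    have hQex : ∀ j : Fin n, ∃ Q : MvPolynomial (Fin n) ℂ,
        ∀ z : K, ‖(starRingEnd ℂ) ((z : EuclideanSpace ℂ (Fin n)) j - a j) -
          MvPolynomial.eval (fun i => (z : EuclideanSpace ℂ (Fin n)) i) Q‖ < δ := by
      intro j
      exact h ⟨fun z => (starRingEnd ℂ) ((z : EuclideanSpace ℂ (Fin n)) j - a j),
        (continuous_conj).comp
          (((EuclideanSpace.proj j).continuous.comp continuous_subtype_val).sub
            continuous_const)⟩ δ hδpos
    choose Q hQ using hQex
    obtain ⟨P₀, hP₀⟩ : ∃ P₀ : MvPolynomial (Fin n) ℂ,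
        P₀ = ∑ j : Fin n, (MvPolynomial.X j - MvPolynomial.C (a j)) * Q j := ⟨_, rfl⟩
    have hevalP₀ : ∀ w : EuclideanSpace ℂ (Fin n), MvPolynomial.eval (fun i => w i) P₀ =
        ∑ j : Fin n, (w j - a j) * MvPolynomial.eval (fun i => w i) (Q j) := by
      intro w
      simp [hP₀, map_sum, map_mul, map_sub, MvPolynomial.eval_X, MvPolynomial.eval_C]
    have hP₀a : MvPolynomial.eval (fun i => a i) P₀ = 0 := by
      rw [hevalP₀]
      simp
    have herr : ∀ w ∈ L, ‖MvPolynomial.eval (fun i => w i) P₀ - (D w : ℂ)‖ ≤ m / 2 := by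
      intro w hw
      have hcast : (D w : ℂ) = ∑ j : Fin n, (w j - a j) * (starRingEnd ℂ) (w j - a j) := by
        rw [hD]
        push_cast
        refine Finset.sum_congr rfl fun j _ => ?_
        rw [Complex.mul_conj, Complex.normSq_eq_norm_sq]
        push_cast
        ring
      rw [hevalP₀, hcast, ← Finset.sum_sub_distrib]
      have hbound : ∀ j : Fin n, ‖(w j - a j) * MvPolynomial.eval (fun i => w i) (Q j) -
          (w j - a j) * (starRingEnd ℂ) (w j - a j)‖ ≤ ‖w j - a j‖ * δ := by
        intro j
        rw [← mul_sub, norm_mul]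
        refine mul_le_mul_of_nonneg_left ?_ (norm_nonneg _)
        have := hQ j ⟨w, hLK hw⟩
        rw [norm_sub_rev] at this
        exact this.le
      calc ‖∑ j : Fin n, ((w j - a j) * MvPolynomial.eval (fun i => w i) (Q j) -
              (w j - a j) * (starRingEnd ℂ) (w j - a j))‖
          ≤ ∑ j : Fin n, ‖(w j - a j) * MvPolynomial.eval (fun i => w i) (Q j) -
              (w j - a j) * (starRingEnd ℂ) (w j - a j)‖ := norm_sum_le _ _
        _ ≤ ∑ j : Fin n, ‖w j - a j‖ * δ := Finset.sum_le_sum fun j _ => hbound j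
        _ = T w * δ := by rw [hT, Finset.sum_mul]
        _ ≤ R * δ := mul_le_mul_of_nonneg_right (hTle w (hLK hw)) hδpos.le
        _ ≤ m / 2 := by
            rw [hδdef, ← mul_div_assoc,
              div_le_div_iff₀ (by positivity) (by norm_num : (0:ℝ) < 2)]
            nlinarith
    obtain ⟨creal, hcreal⟩ : ∃ c : ℝ, c = R ^ 2 + 2 * m := ⟨_, rfl⟩
    have hcpos : 0 < creal := by rw [hcreal]; positivity
    obtain ⟨F, hF⟩ : ∃ F : MvPolynomial (Fin n) ℂ,
        F = MvPolynomial.C (creal : ℂ) - P₀ := ⟨_, rfl⟩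
    have hFa : ‖MvPolynomial.eval (fun i => a i) F‖ = creal := by
      rw [hF, map_sub, MvPolynomial.eval_C, hP₀a, sub_zero, Complex.norm_real,
        Real.norm_eq_abs, abs_of_pos hcpos]
    obtain ⟨B, hB⟩ : ∃ B : ℝ, B = Real.sqrt ((creal - m / 2) ^ 2 + (m / 2) ^ 2) := ⟨_, rfl⟩
    have hFw : ∀ w ∈ L, ‖MvPolynomial.eval (fun i => w i) F‖ ≤ B := by
      intro w hw
      obtain ⟨z, hz⟩ : ∃ z : ℂ, MvPolynomial.eval (fun i => w i) P₀ = z := ⟨_, rfl⟩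
      obtain ⟨d, hd⟩ : ∃ d : ℝ, D w = d := ⟨_, rfl⟩
      have herr' := herr w hw
      have hdm : m ≤ d := hd ▸ hm ▸ hw₀min hw
      have hdR : d ≤ R ^ 2 := hd ▸ hDle w (hLK hw)
      rw [hz, hd] at herr'
      have hrebd : |z.re - d| ≤ m / 2 := by
        have h1 : |(z - (d : ℂ)).re| ≤ ‖z - (d : ℂ)‖ := by
          exact Complex.abs_re_le_norm _
        simpa using le_trans h1 herr'
      have himbd : |z.im| ≤ m / 2 := by
        have h1 : |(z - (d : ℂ)).im| ≤ ‖z - (d : ℂ)‖ := by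
          exact Complex.abs_im_le_norm _
        simpa using le_trans h1 herr'
      have hevF : MvPolynomial.eval (fun i => w i) F = (creal : ℂ) - z := by
        rw [hF, map_sub, MvPolynomial.eval_C, hz]
      have hnormsq : ‖(creal : ℂ) - z‖ ^ 2 = (creal - z.re) ^ 2 + z.im ^ 2 := by
        rw [Complex.sq_norm, Complex.normSq_apply]
        simp [Complex.sub_re, Complex.sub_im]
        ring
      rw [hevF, hB, Real.le_sqrt (norm_nonneg _) (by positivity), hnormsq]
      obtain ⟨hre1, hre2⟩ := abs_le.1 hrebd
      obtain ⟨him1, him2⟩ := abs_le.1 himbd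
      have hc2 : creal = R ^ 2 + 2 * m := hcreal
      have h3 : (creal - z.re) ^ 2 ≤ (creal - m / 2) ^ 2 := by nlinarith
      have h4 : z.im ^ 2 ≤ (m / 2) ^ 2 := by nlinarith
      linarith
    have hBlt : B < creal := by
      rw [hB, Real.sqrt_lt' hcpos]
      nlinarith
    have hsup := ha F
    have hle : sSup ((fun w : EuclideanSpace ℂ (Fin n) =>
        ‖MvPolynomial.eval (fun j => w j) F‖) '' L) ≤ B := by
      apply csSup_le (hLne.image _)
      rintro x ⟨w, hw, rfl⟩
      exact hFw w hw
    rw [hFa] at hsup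
    linarith
  · -- L ⊆ polyHull L
    intro a ha P
    refine le_csSup ?_ ⟨a, ha, rfl⟩
    exact (hLc.image (continuous_norm.comp ((MvPolynomial.continuous_eval P).comp
      (continuous_pi fun j => (EuclideanSpace.proj j).continuous)))).bddAbove
end
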